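/- The set of reset words of the three-state DFA ℬ equals I, i.e. Syn(ℬ) = I. -/

import Mathlib

/-- The transition function of a DFA extended to words (read left to right). -/
def deltaStar {Q A : Type} (δ : Q → A → Q) (q : Q) (w : List A) : Q :=
  w.foldl δ q

/-- `w` is a reset word for the DFA with transition function `δ`. -/
def IsReset {Q A : Type} (δ : Q → A → Q) (w : List A) : Prop :=
  ∀ q q' : Q, deltaStar δ q w = deltaStar δ q' w


/-- The set of reset words of a DFA. -/
def Syn {Q A : Type} (δ : Q → A → Q) : Set (List A) :=
  {w | IsReset δ w}

/-- The alphabet Δ = Σ ∪ {x,y,z}: `Sum.inl a` is a letter of Σ, and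
`Sum.inr 0`, `Sum.inr 1`, `Sum.inr 2` are the new letters x, y, z. -/
abbrev Alph (σ : Type) : Type := σ ⊕ Fin 3

def xL {σ : Type} : Alph σ := Sum.inr 0
def yL {σ : Type} : Alph σ := Sum.inr 1
def zL {σ : Type} : Alph σ := Sum.inr 2

/-- `w ∈ (Σ ∪ {x})*`, i.e. `w` contains no occurrence of the letters y and z. -/
def noYZ {σ : Type} (w : List (Alph σ)) : Prop := yL ∉ w ∧ zL ∉ w

/-- L₁ = (Σ∪{x})* y Δ* -/
def L1 {σ : Type} : Set (List (Alph σ)) :=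
  {w | ∃ u v, noYZ u ∧ w = u ++ yL :: v}

/-- L₂ = (Σ∪{x})* z Δ⁺ -/
def L2 {σ : Type} : Set (List (Alph σ)) :=
  {w | ∃ u v, noYZ u ∧ v ≠ [] ∧ w = u ++ zL :: v}

/-- The ideal language I = L₁ ∪ L₂. -/
def ISet {σ : Type} : Set (List (Alph σ)) := L1 ∪ L2

/-- The 3-state DFA ℬ: states `0 = p₁`, `1 = p₂`, `2 = s` (the sink). -/
def tauB {σ : Type} (p : Fin 3) (a : Alph σ) : Fin 3 :=
  if p = 0 then
    match a with
    | Sum.inl _ => 0                                -- τ(p₁,a) = p₁ for a ∈ Σ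
    | Sum.inr k => if k = 0 then 0                  -- τ(p₁,x) = p₁
                   else if k = 1 then 2             -- τ(p₁,y) = s
                   else 1                            -- τ(p₁,z) = p₂
  else 2                                             -- τ(p₂,·) = τ(s,·) = s



section Aux
variable {σ : Type}

lemma deltaStar_cons {Q A : Type} (δ : Q → A → Q) (q : Q) (a : A) (w : List A) :
    deltaStar δ q (a :: w) = deltaStar δ (δ q a) w := rfl

lemma deltaStar_append {Q A : Type} (δ : Q → A → Q) (q : Q) (u v : List A) :
    deltaStar δ q (u ++ v) = deltaStar δ (deltaStar δ q u) v := by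
  simp [deltaStar, List.foldl_append]

lemma sinkB (w : List (Alph σ)) : deltaStar (tauB (σ := σ)) 2 w = 2 := by
  induction w with
  | nil => rfl
  | cons a t ih =>
    rw [deltaStar_cons]
    have : tauB (σ := σ) 2 a = 2 := by simp [tauB]
    rw [this]; exact ih

lemma from1B (w : List (Alph σ)) (h : w ≠ []) :
    deltaStar (tauB (σ := σ)) 1 w = 2 := by
  obtain ⟨a, t, rfl⟩ := List.exists_cons_of_ne_nil h
  rw [deltaStar_cons]
  have : tauB (σ := σ) 1 a = 2 := by simp [tauB]
  rw [this]; exact sinkB t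

lemma tau0 (a : Alph σ) (hy : a ≠ yL) (hz : a ≠ zL) : tauB (σ := σ) 0 a = 0 := by
  match a with
  | Sum.inl s => simp [tauB]
  | Sum.inr k =>
    have hk1 : k ≠ 1 := fun h => hy (by simp [yL, h])
    have hk2 : k ≠ 2 := fun h => hz (by simp [zL, h])
    have hk0 : k = 0 := by omega
    simp [tauB, hk0]

lemma tauy : tauB (σ := σ) 0 yL = 2 := by simp [tauB, yL]
lemma tauz : tauB (σ := σ) 0 zL = 1 := by simp [tauB, zL]

lemma noYZ_run (u : List (Alph σ)) (h : noYZ u) :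
    deltaStar (tauB (σ := σ)) 0 u = 0 := by
  induction u with
  | nil => rfl
  | cons a t ih =>
    obtain ⟨hy, hz⟩ := h
    rw [deltaStar_cons, tau0 a (fun e => hy (e ▸ (List.mem_cons_self : a ∈ a :: t)))
      (fun e => hz (e ▸ (List.mem_cons_self : a ∈ a :: t)))]
    exact ih ⟨fun m => hy (List.mem_cons_of_mem a m), fun m => hz (List.mem_cons_of_mem a m)⟩

lemma ISet_cons (a : Alph σ) (t : List (Alph σ)) (hy : a ≠ yL) (hz : a ≠ zL)
    (h : t ∈ ISet (σ := σ)) : (a :: t) ∈ ISet (σ := σ) := by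
  rcases h with ⟨u, v, hu, rfl⟩ | ⟨u, v, hu, hv, rfl⟩
  · exact Or.inl ⟨a :: u, v, ⟨by simp [hy.symm, hu.1], by simp [hz.symm, hu.2]⟩, rfl⟩
  · exact Or.inr ⟨a :: u, v, ⟨by simp [hy.symm, hu.1], by simp [hz.symm, hu.2]⟩, hv, rfl⟩

lemma run0 (w : List (Alph σ)) :
    (noYZ w ∧ deltaStar (tauB (σ := σ)) 0 w = 0) ∨
    ((∃ u, noYZ u ∧ w = u ++ [zL]) ∧ deltaStar (tauB (σ := σ)) 0 w = 1) ∨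
    (w ∈ ISet (σ := σ) ∧ deltaStar (tauB (σ := σ)) 0 w = 2) := by
  induction w with
  | nil => exact Or.inl ⟨⟨by simp, by simp⟩, rfl⟩
  | cons a t ih =>
    by_cases hya : a = yL
    · subst hya
      refine Or.inr (Or.inr ⟨Or.inl ⟨[], t, ⟨by simp, by simp⟩, rfl⟩, ?_⟩)
      rw [deltaStar_cons, tauy]; exact sinkB t
    · by_cases hza : a = zL
      · subst hza
        rcases eq_or_ne t [] with rfl | ht
        · exact Or.inr (Or.inl ⟨⟨[], ⟨by simp, by simp⟩, rfl⟩, by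
            rw [deltaStar_cons, tauz]; rfl⟩)
        · refine Or.inr (Or.inr ⟨Or.inr ⟨[], t, ⟨by simp, by simp⟩, ht, rfl⟩, ?_⟩)
          rw [deltaStar_cons, tauz]; exact from1B t ht
      · rw [deltaStar_cons, tau0 a hya hza]
        rcases ih with ⟨hn, hd⟩ | ⟨⟨u, hu, rfl⟩, hd⟩ | ⟨hI, hd⟩
        · exact Or.inl ⟨⟨by simp [hn.1, Ne.symm hya],
            by simp [hn.2, Ne.symm hza]⟩, hd⟩
        · exact Or.inr (Or.inl ⟨⟨a :: u, ⟨by simp [Ne.symm hya, hu.1],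
            by simp [Ne.symm hza, hu.2]⟩, rfl⟩, hd⟩)
        · exact Or.inr (Or.inr ⟨ISet_cons a t hya hza hI, hd⟩)

end Aux

/-- The set of reset words of the three-state DFA ℬ equals I. -/
theorem syn_B_eq_I (σ : Type) [Fintype σ] :
    Syn (tauB (σ := σ)) = ISet := by
  ext w
  constructor
  · intro h
    have h12 := h 1 2
    rcases eq_or_ne w [] with rfl | hne
    · exact absurd h12 (by simp [deltaStar])
    have h02 := h 0 2
    rw [sinkB] at h02
    rcases run0 w with ⟨_, hd⟩ | ⟨_, hd⟩ | ⟨hI, _⟩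
    · rw [hd] at h02; exact absurd h02 (by decide)
    · rw [hd] at h02; exact absurd h02 (by decide)
    · exact hI
  · intro hI
    have hne : w ≠ [] := by
      rcases hI with ⟨u, v, _, rfl⟩ | ⟨u, v, _, _, rfl⟩ <;> simp
    have h0 : deltaStar (tauB (σ := σ)) 0 w = 2 := by
      rcases hI with ⟨u, v, hu, rfl⟩ | ⟨u, v, hu, hv, rfl⟩
      · rw [deltaStar_append, noYZ_run u hu, deltaStar_cons, tauy]; exact sinkB v
      · rw [deltaStar_append, noYZ_run u hu, deltaStar_cons, tauz]; exact from1B v hv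
    have key : ∀ q : Fin 3, deltaStar (tauB (σ := σ)) q w = 2 := by
      intro q
      fin_cases q
      · exact h0
      · exact from1B w hne
      · exact sinkB w
    intro q q'
    rw [key q, key q']
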